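/- Let s ∈ (0, 1/2) with t₁(s) = 7 + 3^{3−2s} − 2^{5−2s} > 0 (i.e. s ∈ (0, s₀) where s₀ is the unique zero of t₁ in (0,1/2)). Let h > 0, let N ≥ 2 be an integer, and let S be the (N−1)×(N−1) matrix with entries S_{kj} = A_s h^{1−2s} t_{|k−j|}(s). Then 0 < t₁(s) < 2; S_{kk} > 0 for all k; S_{kj} > 0 when |k−j| = 1; S_{kj} < 0 when |k−j| ≥ 2; and for every 1 ≤ k ≤ N−1, S_{kk} − Σ_{j≠k} |S_{kj}| > −4 A_s t₁(s) h^{1−2s}. -/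

import Mathlib

/-- `t_p(s)`, with the convention `0^(3-2s) = 0` (automatic for `rpow`). -/
noncomputable def tFn (s : ℝ) (p : ℕ) : ℝ :=
  |(p : ℝ) - 2| ^ (3 - 2 * s) - 4 * |(p : ℝ) - 1| ^ (3 - 2 * s) + 6 * (p : ℝ) ^ (3 - 2 * s)
    - 4 * ((p : ℝ) + 1) ^ (3 - 2 * s) + ((p : ℝ) + 2) ^ (3 - 2 * s)

/-- `t₁(s) = 7 + 3^(3-2s) - 2^(5-2s)`. -/
noncomputable def t1 (s : ℝ) : ℝ := 7 + (3 : ℝ) ^ (3 - 2 * s) - (2 : ℝ) ^ (5 - 2 * s)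

/-- `A_s = 1/(2 Γ(4-2s) cos(sπ))`. -/
noncomputable def Acoef (s : ℝ) : ℝ := 1 / (2 * Real.Gamma (4 - 2 * s) * Real.cos (s * Real.pi))

open Real Set

/-- For a strictly concave function on `[0,∞)`, the unit-difference `F (x+1) - F x`
is strictly decreasing. -/
lemma slope_anti_of_strictConcave {F : ℝ → ℝ} (hF : StrictConcaveOn ℝ (Set.Ici 0) F)
    {x y : ℝ} (hx : 0 ≤ x) (hxy : x < y) :
    F (y + 1) - F y < F (x + 1) - F x := by
  have hy : 0 ≤ y := hx.trans hxy.le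
  have hd : 0 < y + 1 - x := by linarith
  set t : ℝ := (y - x) / (y + 1 - x) with htdef
  have ht0 : 0 < t := div_pos (by linarith) hd
  have ht1 : t < 1 := (div_lt_one hd).2 (by linarith)
  have hmem1 : x ∈ Set.Ici (0:ℝ) := hx
  have hmem2 : (y + 1) ∈ Set.Ici (0:ℝ) := by simp only [Set.mem_Ici]; linarith
  have hne : x ≠ y + 1 := by intro hcon; linarith
  have e1 : t * x + (1 - t) * (y + 1) = x + 1 := by
    rw [htdef]; field_simp; ring
  have e2 : (1 - t) * x + t * (y + 1) = y := by
    rw [htdef]; field_simp; ring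
  have h1 := hF.2 hmem1 hmem2 hne ht0 (by linarith : (0:ℝ) < 1 - t) (show t + (1 - t) = 1 by ring)
  have h2 := hF.2 hmem1 hmem2 hne (by linarith : (0:ℝ) < 1 - t) ht0 (show (1 - t) + t = 1 by ring)
  simp only [smul_eq_mul] at h1 h2
  rw [e1] at h1
  rw [e2] at h2
  linarith

lemma slope_mono_of_strictConvex {F : ℝ → ℝ} (hF : StrictConvexOn ℝ (Set.Ici 0) F)
    {x y : ℝ} (hx : 0 ≤ x) (hxy : x < y) :
    F (x + 1) - F x < F (y + 1) - F y := by
  have := slope_anti_of_strictConcave hF.neg hx hxy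
  simp only [Pi.neg_apply] at this
  linarith

section exponent

variable {a : ℝ} (ha2 : 2 < a) (ha3 : a < 3)

include ha2 ha3 in
lemma w_strictConcave :
    StrictConcaveOn ℝ (Set.Ici 0) (fun x : ℝ => (x + 1) ^ (a - 1) - x ^ (a - 1)) := by
  have hγ : 1 ≤ a - 1 := by linarith
  have hder : ∀ x : ℝ, HasDerivAt (fun x : ℝ => (x + 1) ^ (a - 1) - x ^ (a - 1))
      ((a - 1) * (x + 1) ^ (a - 2) - (a - 1) * x ^ (a - 2)) x := by
    intro x
    have h1 : HasDerivAt (fun x : ℝ => (x + 1) ^ (a - 1)) (1 * (a - 1) * (x + 1) ^ (a - 1 - 1)) x :=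
      ((hasDerivAt_id x).add_const 1).rpow_const (Or.inr hγ)
    have h2 : HasDerivAt (fun x : ℝ => x ^ (a - 1)) ((a - 1) * x ^ (a - 1 - 1)) x :=
      Real.hasDerivAt_rpow_const (Or.inr hγ)
    have h3 := h1.sub h2
    have e : a - 1 - 1 = a - 2 := by ring
    rw [e] at h3
    exact h3.congr_deriv (by ring)
  have hdiff : Differentiable ℝ (fun x : ℝ => (x + 1) ^ (a - 1) - x ^ (a - 1)) :=
    fun x => (hder x).differentiableAt
  apply StrictAntiOn.strictConcaveOn_of_deriv (convex_Ici 0) hdiff.continuous.continuousOn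
  rw [interior_Ici]
  intro x hx y hy hxy
  rw [(hder x).deriv, (hder y).deriv]
  have hψ : StrictConcaveOn ℝ (Set.Ici 0) (fun t : ℝ => t ^ (a - 2)) :=
    Real.strictConcaveOn_rpow (by linarith) (by linarith)
  have hq := slope_anti_of_strictConcave hψ (le_of_lt hx) hxy
  have ha1 : (0:ℝ) < a - 1 := by linarith
  nlinarith [hq, ha1]

include ha2 ha3 in
lemma g_strictConcave :
    StrictConcaveOn ℝ (Set.Ici 0) (fun x : ℝ => x ^ a - 2 * (x + 1) ^ a + (x + 2) ^ a) := by
  have hγ : 1 ≤ a := by linarith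
  have hder : ∀ x : ℝ, HasDerivAt (fun x : ℝ => x ^ a - 2 * (x + 1) ^ a + (x + 2) ^ a)
      (a * x ^ (a - 1) - 2 * (a * (x + 1) ^ (a - 1)) + a * (x + 2) ^ (a - 1)) x := by
    intro x
    have h1 : HasDerivAt (fun x : ℝ => x ^ a) (a * x ^ (a - 1)) x :=
      Real.hasDerivAt_rpow_const (Or.inr hγ)
    have h2 : HasDerivAt (fun x : ℝ => (x + 1) ^ a) (1 * a * (x + 1) ^ (a - 1)) x :=
      ((hasDerivAt_id x).add_const 1).rpow_const (Or.inr hγ)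
    have h3 : HasDerivAt (fun x : ℝ => (x + 2) ^ a) (1 * a * (x + 2) ^ (a - 1)) x :=
      ((hasDerivAt_id x).add_const 2).rpow_const (Or.inr hγ)
    have h4 := (h1.sub (h2.const_mul 2)).add h3
    exact h4.congr_deriv (by ring)
  have hdiff : Differentiable ℝ (fun x : ℝ => x ^ a - 2 * (x + 1) ^ a + (x + 2) ^ a) :=
    fun x => (hder x).differentiableAt
  apply StrictAntiOn.strictConcaveOn_of_deriv (convex_Ici 0) hdiff.continuous.continuousOn
  rw [interior_Ici]
  intro x hx y hy hxy
  rw [(hder x).deriv, (hder y).deriv]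
  have hw := slope_anti_of_strictConcave (w_strictConcave ha2 ha3) (le_of_lt hx) hxy
  rw [show y + 1 + 1 = y + 2 by ring, show x + 1 + 1 = x + 2 by ring] at hw
  have ha0 : (0:ℝ) < a := by linarith
  nlinarith [mul_lt_mul_of_pos_left hw ha0]

include ha2 ha3 in
lemma D_strictConvex :
    StrictConvexOn ℝ (Set.Ici 0) (fun x : ℝ => (x + 1) ^ a - x ^ a) := by
  have hγ : 1 ≤ a := by linarith
  have hder : ∀ x : ℝ, HasDerivAt (fun x : ℝ => (x + 1) ^ a - x ^ a)
      (a * (x + 1) ^ (a - 1) - a * x ^ (a - 1)) x := by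
    intro x
    have h1 : HasDerivAt (fun x : ℝ => (x + 1) ^ a) (1 * a * (x + 1) ^ (a - 1)) x :=
      ((hasDerivAt_id x).add_const 1).rpow_const (Or.inr hγ)
    have h2 : HasDerivAt (fun x : ℝ => x ^ a) (a * x ^ (a - 1)) x :=
      Real.hasDerivAt_rpow_const (Or.inr hγ)
    have h3 := h1.sub h2
    exact h3.congr_deriv (by ring)
  have hdiff : Differentiable ℝ (fun x : ℝ => (x + 1) ^ a - x ^ a) :=
    fun x => (hder x).differentiableAt
  apply StrictMonoOn.strictConvexOn_of_deriv (convex_Ici 0) hdiff.continuous.continuousOn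
  rw [interior_Ici]
  intro x hx y hy hxy
  rw [(hder x).deriv, (hder y).deriv]
  have hφ : StrictConvexOn ℝ (Set.Ici 0) (fun t : ℝ => t ^ (a - 1)) :=
    strictConvexOn_rpow (by linarith)
  have hq := slope_mono_of_strictConvex hφ (le_of_lt hx) hxy
  have ha0 : (0:ℝ) < a := by linarith
  nlinarith [hq, ha0]

include ha2 ha3 in
lemma t_neg_real {p : ℝ} (hp : 2 ≤ p) :
    (p - 2) ^ a - 4 * (p - 1) ^ a + 6 * p ^ a - 4 * (p + 1) ^ a + (p + 2) ^ a < 0 := by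
  have hg := g_strictConcave ha2 ha3
  have hmem1 : p - 2 ∈ Set.Ici (0:ℝ) := by simp only [Set.mem_Ici]; linarith
  have hmem2 : p ∈ Set.Ici (0:ℝ) := by simp only [Set.mem_Ici]; linarith
  have hne : p - 2 ≠ p := by intro hcon; linarith
  have h := hg.2 hmem1 hmem2 hne (by norm_num : (0:ℝ) < 1/2) (by norm_num : (0:ℝ) < 1/2)
    (by norm_num : (1:ℝ)/2 + 1/2 = 1)
  simp only [smul_eq_mul] at h
  rw [show (1:ℝ)/2 * (p - 2) + 1/2 * p = p - 1 by ring] at h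
  rw [show p - 2 + 1 = p - 1 by ring, show p - 2 + 2 = p by ring,
    show p - 1 + 1 = p by ring, show p - 1 + 2 = p + 1 by ring] at h
  linarith

include ha2 ha3 in
lemma u_pos_real {m : ℝ} (hm : 1 ≤ m) :
    0 < (m + 2) ^ a - 3 * (m + 1) ^ a + 3 * m ^ a - (m - 1) ^ a := by
  have hD := D_strictConvex ha2 ha3
  have hmem1 : m - 1 ∈ Set.Ici (0:ℝ) := by simp only [Set.mem_Ici]; linarith
  have hmem2 : m + 1 ∈ Set.Ici (0:ℝ) := by simp only [Set.mem_Ici]; linarith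
  have hne : m - 1 ≠ m + 1 := by intro hcon; linarith
  have h := hD.2 hmem1 hmem2 hne (by norm_num : (0:ℝ) < 1/2) (by norm_num : (0:ℝ) < 1/2)
    (by norm_num : (1:ℝ)/2 + 1/2 = 1)
  simp only [smul_eq_mul] at h
  rw [show (1:ℝ)/2 * (m - 1) + 1/2 * (m + 1) = m by ring] at h
  rw [show m - 1 + 1 = m by ring, show m + 1 + 1 = m + 2 by ring] at h
  linarith

end exponent

noncomputable def Ufun (a x : ℝ) : ℝ :=
  (x + 2) ^ a - 3 * (x + 1) ^ a + 3 * x ^ a - (x - 1) ^ a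

section sparam

variable {s : ℝ} (hs0 : 0 < s) (hs2 : s < 1/2)

include hs0 hs2

lemma rpow22 : (2:ℝ) ^ (2:ℝ) = 4 := by norm_num

lemma t1_eq : t1 s = 7 + (3:ℝ) ^ (3 - 2*s) - 4 * (2:ℝ) ^ (3 - 2*s) := by
  have h5 : (2:ℝ) ^ (5 - 2*s) = 4 * (2:ℝ) ^ (3 - 2*s) := by
    rw [show (5 - 2*s) = 2 + (3 - 2*s) by ring, Real.rpow_add (by norm_num : (0:ℝ) < 2),
      rpow22 hs0 hs2]
  rw [t1, h5]

lemma tFn_zero : tFn s 0 = 2 * (2:ℝ) ^ (3 - 2*s) - 8 := by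
  have hne : (3:ℝ) - 2*s ≠ 0 := by intro hcon; linarith
  simp only [tFn, Nat.cast_zero]
  rw [show (0:ℝ) - 2 = -2 by ring, show (0:ℝ) - 1 = -1 by ring, show (0:ℝ) + 1 = 1 by ring,
    show (0:ℝ) + 2 = 2 by ring, abs_neg, abs_neg, abs_two, abs_one,
    Real.one_rpow, Real.zero_rpow hne]
  ring

lemma tFn_one : tFn s 1 = t1 s := by
  have hne : (3:ℝ) - 2*s ≠ 0 := by intro hcon; linarith
  rw [t1_eq hs0 hs2]
  simp only [tFn, Nat.cast_one]
  rw [show (1:ℝ) - 2 = -1 by ring, show (1:ℝ) - 1 = 0 by ring, show (1:ℝ) + 1 = 2 by ring,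
    show (1:ℝ) + 2 = 3 by ring, abs_neg, abs_one, abs_zero,
    Real.one_rpow, Real.zero_rpow hne]
  ring

lemma tFn_ge2 (p : ℕ) (hp : 2 ≤ p) :
    tFn s p = ((p:ℝ) - 2) ^ (3 - 2*s) - 4 * ((p:ℝ) - 1) ^ (3 - 2*s) + 6 * (p:ℝ) ^ (3 - 2*s)
      - 4 * ((p:ℝ) + 1) ^ (3 - 2*s) + ((p:ℝ) + 2) ^ (3 - 2*s) := by
  have h2 : (2:ℝ) ≤ (p:ℝ) := by exact_mod_cast hp
  simp only [tFn]
  rw [abs_of_nonneg (by linarith : (0:ℝ) ≤ (p:ℝ) - 2),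
    abs_of_nonneg (by linarith : (0:ℝ) ≤ (p:ℝ) - 1)]

lemma tFn_neg (p : ℕ) (hp : 2 ≤ p) : tFn s p < 0 := by
  rw [tFn_ge2 hs0 hs2 p hp]
  exact t_neg_real (by linarith) (by linarith) (by exact_mod_cast hp)

lemma tFn_eq_U (p : ℕ) (hp : 2 ≤ p) :
    tFn s p = Ufun (3 - 2*s) (p : ℝ) - Ufun (3 - 2*s) ((p:ℝ) - 1) := by
  rw [tFn_ge2 hs0 hs2 p hp]
  simp only [Ufun]
  rw [show (p:ℝ) - 1 + 2 = (p:ℝ) + 1 by ring, show (p:ℝ) - 1 + 1 = (p:ℝ) by ring,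
    show (p:ℝ) - 1 - 1 = (p:ℝ) - 2 by ring]
  ring

lemma U1_eq : Ufun (3 - 2*s) 1 = 3 + (3:ℝ) ^ (3 - 2*s) - 3 * (2:ℝ) ^ (3 - 2*s) := by
  have hne : (3:ℝ) - 2*s ≠ 0 := by intro hcon; linarith
  simp only [Ufun]
  norm_num
  rw [Real.zero_rpow hne]
  ring

lemma U_pos (m : ℕ) (hm : 1 ≤ m) : 0 < Ufun (3 - 2*s) (m : ℝ) := by
  have h1 : (1:ℝ) ≤ (m:ℝ) := by exact_mod_cast hm
  exact u_pos_real (by linarith) (by linarith) h1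

lemma T_lt (ht1 : 0 < t1 s) (m : ℕ) :
    ∑ j ∈ Finset.range m, |tFn s (j + 1)| < t1 s + Ufun (3 - 2*s) 1 := by
  have hU1 : 0 < Ufun (3 - 2*s) 1 := by
    have := U_pos hs0 hs2 1 le_rfl
    simpa using this
  have key : ∀ n : ℕ, 1 ≤ n →
      ∑ j ∈ Finset.range n, |tFn s (j + 1)| = t1 s + Ufun (3 - 2*s) 1 - Ufun (3 - 2*s) (n : ℝ) := by
    intro n hn
    induction n with
    | zero => omega
    | succ n ih =>
      rcases Nat.lt_or_ge 1 (n + 1) with h1 | h1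
      · have hn1 : 1 ≤ n := by omega
        rw [Finset.sum_range_succ, ih hn1]
        have h2 : 2 ≤ n + 1 := by omega
        rw [abs_of_neg (tFn_neg hs0 hs2 (n + 1) h2), tFn_eq_U hs0 hs2 (n + 1) h2]
        push_cast
        rw [show (n:ℝ) + 1 - 1 = (n:ℝ) by ring]
        ring
      · have : n = 0 := by omega
        subst this
        rw [Finset.sum_range_one]
        simp only [zero_add, Nat.cast_one]
        rw [tFn_one hs0 hs2, abs_of_pos ht1]
        ring
  rcases Nat.eq_zero_or_pos m with h | h
  · subst h
    simp only [Finset.range_zero, Finset.sum_empty]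
    linarith
  · rw [key m h]
    have := U_pos hs0 hs2 m h
    linarith

lemma t1_lt_two : t1 s < 2 := by
  have h2pos : (0:ℝ) < (2:ℝ) ^ (3 - 2*s) := Real.rpow_pos_of_pos (by norm_num) _
  have c1 : (3/2:ℝ) ^ (2:ℝ) = 9/4 := by norm_num
  have c2 : (3/2:ℝ) ^ (3:ℝ) = 27/8 := by norm_num
  have c3 : (1/2:ℝ) ^ (2:ℝ) = 1/4 := by norm_num
  have c4 : (1/2:ℝ) ^ (3:ℝ) = 1/8 := by norm_num
  have base : ∀ b : ℝ, 0 < b →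
      b ^ (3 - 2*s) = (b ^ (2:ℝ)) ^ (2*s) * (b ^ (3:ℝ)) ^ (1 - 2*s) := by
    intro b hb
    rw [show (3 - 2*s) = 2*(2*s) + 3*(1 - 2*s) by ring, Real.rpow_add hb,
      Real.rpow_mul hb.le, Real.rpow_mul hb.le]
  have hw1 : (0:ℝ) ≤ 2*s := by linarith
  have hw2 : (0:ℝ) ≤ 1 - 2*s := by linarith
  have h1 : (3/2:ℝ) ^ (3 - 2*s) ≤ (2*s) * (9/4) + (1 - 2*s) * (27/8) := by
    rw [base (3/2) (by norm_num), c1, c2]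
    exact Real.geom_mean_le_arith_mean2_weighted hw1 hw2 (by norm_num) (by norm_num)
      (by ring)
  have h2 : (1/2:ℝ) ^ (3 - 2*s) ≤ (2*s) * (1/4) + (1 - 2*s) * (1/8) := by
    rw [base (1/2) (by norm_num), c3, c4]
    exact Real.geom_mean_le_arith_mean2_weighted hw1 hw2 (by norm_num) (by norm_num)
      (by ring)
  have hm1 : (3/2:ℝ) ^ (3 - 2*s) * (2:ℝ) ^ (3 - 2*s) = (3:ℝ) ^ (3 - 2*s) := by
    rw [← Real.mul_rpow (by norm_num) (by norm_num)]
    norm_num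
  have hm2 : (1/2:ℝ) ^ (3 - 2*s) * (2:ℝ) ^ (3 - 2*s) = 1 := by
    rw [← Real.mul_rpow (by norm_num) (by norm_num)]
    norm_num
  have e5 : (3:ℝ) ^ (3 - 2*s) + 5 =
      ((3/2:ℝ) ^ (3 - 2*s) + 5 * (1/2:ℝ) ^ (3 - 2*s)) * (2:ℝ) ^ (3 - 2*s) := by
    rw [add_mul, hm1, mul_assoc, hm2, mul_one]
  have hkey : (3/2:ℝ) ^ (3 - 2*s) + 5 * (1/2:ℝ) ^ (3 - 2*s) ≤ 4 - s := by
    nlinarith [h1, h2]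
  have hlt : (3:ℝ) ^ (3 - 2*s) + 5 < 4 * (2:ℝ) ^ (3 - 2*s) := by
    rw [e5]
    nlinarith [h2pos, hs0]
  rw [t1_eq hs0 hs2]
  linarith

end sparam

theorem stmt14 (s : ℝ) (hs : s ∈ Set.Ioo (0 : ℝ) (1 / 2)) (ht1 : 0 < t1 s)
    (h : ℝ) (hh : 0 < h) (N : ℕ) (hN : 2 ≤ N)
    (S : Matrix (Fin (N - 1)) (Fin (N - 1)) ℝ)
    (hS : ∀ k j, S k j =
      Acoef s * h ^ (1 - 2 * s) * tFn s (((k : ℕ) : ℤ) - ((j : ℕ) : ℤ)).natAbs) :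
    (0 < t1 s ∧ t1 s < 2) ∧
    (∀ k, 0 < S k k) ∧
    (∀ k j : Fin (N - 1), (((k : ℕ) : ℤ) - ((j : ℕ) : ℤ)).natAbs = 1 → 0 < S k j) ∧
    (∀ k j : Fin (N - 1), 2 ≤ (((k : ℕ) : ℤ) - ((j : ℕ) : ℤ)).natAbs → S k j < 0) ∧
    (∀ k, -(4 * Acoef s * t1 s * h ^ (1 - 2 * s)) <
      S k k - ∑ j ∈ Finset.univ.filter (fun j => j ≠ k), |S k j|) := by
  obtain ⟨hs0, hs2⟩ := hs
  have hs2' : s < 1/2 := hs2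
  have hA : 0 < Acoef s := by
    have hΓ : 0 < Real.Gamma (4 - 2*s) := Real.Gamma_pos_of_pos (by linarith)
    have hcos : 0 < Real.cos (s * Real.pi) := by
      apply Real.cos_pos_of_mem_Ioo
      constructor
      · nlinarith [Real.pi_pos]
      · nlinarith [Real.pi_pos]
    rw [Acoef]
    positivity
  have hH : 0 < h ^ (1 - 2*s) := Real.rpow_pos_of_pos hh _
  have hAH : 0 < Acoef s * h ^ (1 - 2*s) := mul_pos hA hH
  have ht0pos : 0 < tFn s 0 := by
    rw [tFn_zero hs0 hs2']
    have h4 : (4:ℝ) < (2:ℝ) ^ (3 - 2*s) := by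
      calc (4:ℝ) = (2:ℝ) ^ (2:ℝ) := by norm_num
        _ < (2:ℝ) ^ (3 - 2*s) := by
            apply (Real.rpow_lt_rpow_left_iff (by norm_num : (1:ℝ) < 2)).2
            linarith
    linarith
  refine ⟨⟨ht1, t1_lt_two hs0 hs2'⟩, ?_, ?_, ?_, ?_⟩
  · intro k
    rw [hS k k]
    simp only [sub_self, Int.natAbs_zero]
    exact mul_pos hAH ht0pos
  · intro k j hd
    rw [hS k j, hd, tFn_one hs0 hs2']
    exact mul_pos hAH ht1
  · intro k j hd
    rw [hS k j]
    exact mul_neg_of_pos_of_neg hAH (tFn_neg hs0 hs2' _ hd)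
  · intro k
    classical
    have hkn : (k:ℕ) < N - 1 := k.isLt
    rw [hS k k]
    simp only [sub_self, Int.natAbs_zero]
    have hsum : ∑ j ∈ Finset.univ.filter (fun j => j ≠ k), |S k j|
        = Acoef s * h ^ (1 - 2*s) *
          ∑ j ∈ Finset.univ.filter (fun j => j ≠ k),
            |tFn s (((k:ℕ):ℤ) - ((j:ℕ):ℤ)).natAbs| := by
      rw [Finset.mul_sum]
      refine Finset.sum_congr rfl fun j _ => ?_
      rw [hS k j, abs_mul, abs_of_pos hAH]
    rw [hsum]
    set P : ℕ → ℝ := fun i => |tFn s (((k:ℕ):ℤ) - (i:ℤ)).natAbs| with hP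
    have hbound : ∑ j ∈ Finset.univ.filter (fun j => j ≠ k),
        |tFn s (((k:ℕ):ℤ) - ((j:ℕ):ℤ)).natAbs| < tFn s 0 + 4 * t1 s := by
      have e0 : ∑ j ∈ Finset.univ.filter (fun j => j ≠ k),
          |tFn s (((k:ℕ):ℤ) - ((j:ℕ):ℤ)).natAbs|
          = ∑ i ∈ Finset.range (N-1), (if i = (k:ℕ) then 0 else P i) := by
        rw [Finset.sum_filter,
          ← Fin.sum_univ_eq_sum_range (fun i => if i = (k:ℕ) then 0 else P i) (N-1)]
        refine Finset.sum_congr rfl fun j _ => ?_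
        by_cases hj : j = k
        · subst hj; simp
        · have hval : (j:ℕ) ≠ (k:ℕ) := fun hcon => hj (Fin.ext hcon)
          simp [hj, hval, hP]
      rw [e0]
      have esplit : ∑ i ∈ Finset.range (N-1), (if i = (k:ℕ) then 0 else P i)
          = (∑ i ∈ Finset.range ((k:ℕ)+1), (if i = (k:ℕ) then 0 else P i))
            + ∑ i ∈ Finset.Ico ((k:ℕ)+1) (N-1), (if i = (k:ℕ) then 0 else P i) := by
        rw [Finset.range_eq_Ico,
          ← Finset.sum_Ico_consecutive (fun i => if i = (k:ℕ) then 0 else P i)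
            (Nat.zero_le ((k:ℕ)+1)) (show (k:ℕ)+1 ≤ N-1 by omega),
          ← Finset.range_eq_Ico]
      rw [esplit]
      have eleft1 : ∑ i ∈ Finset.range ((k:ℕ)+1), (if i = (k:ℕ) then 0 else P i)
          = ∑ i ∈ Finset.range (k:ℕ), P i := by
        rw [Finset.sum_range_succ, if_pos rfl, add_zero]
        exact Finset.sum_congr rfl fun i hi =>
          if_neg (by rw [Finset.mem_range] at hi; omega)
      have eleft2 : ∑ i ∈ Finset.range (k:ℕ), P i
          = ∑ j ∈ Finset.range (k:ℕ), |tFn s (j+1)| := by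
        rw [← Finset.sum_range_reflect P (k:ℕ)]
        refine Finset.sum_congr rfl fun j hj => ?_
        rw [Finset.mem_range] at hj
        simp only [hP]
        have h2 : (((k:ℕ):ℤ) - (((k:ℕ) - 1 - j : ℕ):ℤ)).natAbs = j + 1 := by omega
        rw [h2]
      have eright : ∑ i ∈ Finset.Ico ((k:ℕ)+1) (N-1), (if i = (k:ℕ) then 0 else P i)
          = ∑ j ∈ Finset.range (N - 1 - ((k:ℕ)+1)), |tFn s (j+1)| := by
        rw [Finset.sum_Ico_eq_sum_range]
        refine Finset.sum_congr rfl fun j hj => ?_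
        have h1 : (k:ℕ) + 1 + j ≠ (k:ℕ) := by omega
        rw [if_neg h1]
        simp only [hP]
        have h2 : (((k:ℕ):ℤ) - (((k:ℕ) + 1 + j : ℕ):ℤ)).natAbs = j + 1 := by omega
        rw [h2]
      rw [eleft1, eleft2, eright]
      have hTa := T_lt hs0 hs2' ht1 (k:ℕ)
      have hTb := T_lt hs0 hs2' ht1 (N - 1 - ((k:ℕ)+1))
      have hid : tFn s 0 + 4 * t1 s = 2 * (t1 s + Ufun (3 - 2*s) 1) := by
        rw [tFn_zero hs0 hs2', t1_eq hs0 hs2', U1_eq hs0 hs2']; ring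
      linarith
    have hmul := mul_lt_mul_of_pos_left hbound hAH
    nlinarith [hmul]
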